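/- Assume E(|u|²) < ∞ μ-a.e. Then the operator EM_u : D(EM_u) → L²(μ) is closed; that is, whenever f_n ∈ D(EM_u), f_n → f in L²(μ), and EM_u f_n → g in L²(μ), one has f ∈ D(EM_u) and EM_u f = g. -/

import Mathlib

open MeasureTheory Filter ENNReal NNReal

noncomputable section

variable {X : Type*}

/-- A set `A` in the sub-σ-algebra `m` is *admissible* for the weight `u` if
`μ A + ∫_A |u|² dμ < ∞`. -/
def Admissible (m : MeasurableSpace X) [m0 : MeasurableSpace X] (μ : Measure X)
    (u : X → ℂ) (A : Set X) : Prop :=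
  MeasurableSet[m] A ∧ μ A + ∫⁻ x in A, (‖u x‖₊ : ℝ≥0∞) ^ 2 ∂μ < ⊤

/-- `gf` is a version of `E(u·f)`, i.e. `gf` is an `m`-measurable function in `L²(μ)` with
`∫_A u·f dμ = ∫_A gf dμ` for every admissible `A`.  `f ∈ D(EM_u)` iff `f ∈ L²(μ)` and such a
`gf` exists. -/
def IsWCE (m : MeasurableSpace X) [m0 : MeasurableSpace X] (μ : Measure X)
    (u f gf : X → ℂ) : Prop :=
  StronglyMeasurable[m] gf ∧ MemLp gf 2 μ ∧
    ∀ A : Set X, Admissible m μ u A → ∫ x in A, u x * f x ∂μ = ∫ x in A, gf x ∂μ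

lemma aux_one_div : (1:ℝ≥0∞)/1 = 1/2 + 1/2 := by
  simp only [one_div, inv_one, ENNReal.inv_two_add_inv_two]

lemma aux_memL2 {α} [MeasurableSpace α] (μ : Measure α) (u : α → ℂ) (hu : Measurable u)
    (hfin : ∫⁻ x, (‖u x‖₊ : ℝ≥0∞) ^ 2 ∂μ < ⊤) : MemLp u 2 μ := by
  refine ⟨hu.aestronglyMeasurable, ?_⟩
  rw [eLpNorm_eq_lintegral_rpow_enorm_toReal two_ne_zero ENNReal.ofNat_ne_top]
  simp only [ENNReal.toReal_ofNat, ENNReal.rpow_two]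
  exact ENNReal.rpow_lt_top_of_nonneg (by norm_num) (by simpa [enorm_eq_nnnorm] using hfin.ne)

/-- If `E(|u|²) < ∞` a.e., then `EM_u` is closed: if `fₙ ∈ D(EM_u)`, `fₙ → f`
in `L²(μ)` and `EM_u fₙ → g'` in `L²(μ)`, then `f ∈ D(EM_u)` and `EM_u f = g'`. -/
theorem stmt5 (m : MeasurableSpace X) [m0 : MeasurableSpace X] (hm : m ≤ m0)
    (μ : Measure X) [SigmaFinite μ] [SigmaFinite (μ.trim hm)]
    (u : X → ℂ) (hu : Measurable u)
    (g : X → ℝ≥0∞) (hgm : Measurable[m] g)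
    (hg : ∀ A : Set X, MeasurableSet[m] A →
      ∫⁻ x in A, (‖u x‖₊ : ℝ≥0∞) ^ 2 ∂μ = ∫⁻ x in A, g x ∂μ)
    (hgfin : ∀ᵐ x ∂μ, g x < ⊤)
    (fn gn : ℕ → X → ℂ) (f g' : X → ℂ)
    (hfn : ∀ n, MemLp (fn n) 2 μ) (hgn : ∀ n, IsWCE m μ u (fn n) (gn n))
    (hf : MemLp f 2 μ) (hg' : MemLp g' 2 μ)
    (hconv1 : Tendsto (fun n => eLpNorm (fn n - f) 2 μ) atTop (nhds 0))
    (hconv2 : Tendsto (fun n => eLpNorm (gn n - g') 2 μ) atTop (nhds 0)) :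
    ∃ gf : X → ℂ, IsWCE m μ u f gf ∧ gf =ᵐ[μ] g' := by

  -- Step 1: g' has an m-measurable version
  have hLp : Tendsto (fun n => ((hgn n).2.1).toLp (gn n)) atTop (nhds (hg'.toLp g')) := by
    rw [Lp.tendsto_Lp_iff_tendsto_eLpNorm'' gn (fun n => (hgn n).2.1) g' hg']
    exact hconv2
  have hmem : ∀ n, ((hgn n).2.1).toLp (gn n) ∈ {h : Lp ℂ 2 μ | AEStronglyMeasurable[m] h μ} := by
    intro n
    exact ⟨gn n, (hgn n).1, (hgn n).2.1.coeFn_toLp⟩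
  have hg'm : AEStronglyMeasurable[m] (hg'.toLp g' : X → ℂ) μ :=
    (isClosed_aestronglyMeasurable hm).mem_of_tendsto hLp (Eventually.of_forall hmem)
  have hg'm' : AEStronglyMeasurable[m] g' μ := by
    obtain ⟨gm, hgm1, hgm2⟩ := hg'm
    exact ⟨gm, hgm1, hg'.coeFn_toLp.symm.trans hgm2⟩
  set gf : X → ℂ := hg'm'.mk g' with hgf_def
  have heq : g' =ᵐ[μ] gf := hg'm'.ae_eq_mk
  refine ⟨gf, ⟨hg'm'.stronglyMeasurable_mk, hg'.ae_eq heq, ?_⟩, heq.symm⟩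
  intro A hA
  obtain ⟨hAm, hAfin⟩ := hA
  have hAm0 : MeasurableSet A := hm A hAm
  have hAμ : μ A < ⊤ := lt_of_le_of_lt le_self_add hAfin
  have hAu : ∫⁻ x in A, (‖u x‖₊ : ℝ≥0∞) ^ 2 ∂μ < ⊤ := lt_of_le_of_lt le_add_self hAfin
  have hfinA : IsFiniteMeasure (μ.restrict A) := ⟨by rwa [Measure.restrict_apply_univ]⟩
  have hu2 : MemLp u 2 (μ.restrict A) := aux_memL2 _ u hu hAu
  -- integrability
  have hint : ∀ h : X → ℂ, MemLp h 2 μ → Integrable (fun x => u x * h x) (μ.restrict A) := by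
    intro h hh
    have := ((hh.restrict A).smul (r := 1) hu2 (hpqr := ⟨by rw [inv_one]; exact ENNReal.inv_two_add_inv_two⟩)).integrable le_rfl
    exact this.congr (Eventually.of_forall fun x => by simp [smul_eq_mul])
  have hintg : ∀ h : X → ℂ, MemLp h 2 μ → Integrable h (μ.restrict A) := fun h hh =>
    (hh.restrict A).integrable one_le_two
  -- convergence of ∫_A u fn → ∫_A u f
  have key1 : Tendsto (fun n => ∫ x in A, u x * fn n x ∂μ) atTop
      (nhds (∫ x in A, u x * f x ∂μ)) := by
    refine tendsto_integral_of_L1' (μ := μ.restrict A) _ (hint f hf).aestronglyMeasurable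
      (Eventually.of_forall fun n => hint (fn n) (hfn n)) ?_
    have hbound : ∀ n, eLpNorm ((fun x => u x * fn n x) - fun x => u x * f x) 1 (μ.restrict A)
        ≤ eLpNorm u 2 (μ.restrict A) * eLpNorm (fn n - f) 2 μ := by
      intro n
      have h1 : ((fun x => u x * fn n x) - fun x => u x * f x) = u • (fn n - f) := by
        funext x; simp [smul_eq_mul, mul_sub]
      rw [h1]
      calc eLpNorm (u • (fn n - f)) 1 (μ.restrict A)
          ≤ eLpNorm u 2 (μ.restrict A) * eLpNorm (fn n - f) 2 (μ.restrict A) :=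
            eLpNorm_smul_le_mul_eLpNorm
              (((hfn n).sub hf).aestronglyMeasurable.restrict) hu2.aestronglyMeasurable
              (hpqr := ⟨by rw [inv_one]; exact ENNReal.inv_two_add_inv_two⟩)
        _ ≤ eLpNorm u 2 (μ.restrict A) * eLpNorm (fn n - f) 2 μ :=
            mul_le_mul_right (eLpNorm_mono_measure _ Measure.restrict_le_self) _
    have hC : eLpNorm u 2 (μ.restrict A) ≠ ⊤ := hu2.eLpNorm_ne_top
    have htend : Tendsto (fun n => eLpNorm u 2 (μ.restrict A) * eLpNorm (fn n - f) 2 μ)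
        atTop (nhds 0) := by
      have := ENNReal.Tendsto.const_mul (a := eLpNorm u 2 (μ.restrict A)) hconv1 (Or.inr hC)
      simpa using this
    exact tendsto_of_tendsto_of_tendsto_of_le_of_le tendsto_const_nhds htend
      (fun _ => zero_le) hbound
  -- convergence of ∫_A gn → ∫_A g'
  have key2 : Tendsto (fun n => ∫ x in A, gn n x ∂μ) atTop (nhds (∫ x in A, g' x ∂μ)) := by
    refine tendsto_integral_of_L1' (μ := μ.restrict A) _ (hintg g' hg').aestronglyMeasurable
      (Eventually.of_forall fun n => hintg (gn n) ((hgn n).2.1)) ?_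
    set c : ℝ≥0∞ := (μ.restrict A) Set.univ ^ ((1:ℝ)/(1:ℝ≥0∞).toReal - 1/(2:ℝ≥0∞).toReal)
    have hc : c ≠ ⊤ := by
      refine ENNReal.rpow_ne_top_of_nonneg ?_ ?_
      · norm_num
      · rw [Measure.restrict_apply_univ]; exact hAμ.ne
    have hbound : ∀ n, eLpNorm (gn n - g') 1 (μ.restrict A)
        ≤ eLpNorm (gn n - g') 2 μ * c := by
      intro n
      calc eLpNorm (gn n - g') 1 (μ.restrict A)
          ≤ eLpNorm (gn n - g') 2 (μ.restrict A) * c :=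
            eLpNorm_le_eLpNorm_mul_rpow_measure_univ one_le_two
              (((hgn n).2.1.sub hg').aestronglyMeasurable.restrict)
        _ ≤ eLpNorm (gn n - g') 2 μ * c :=
            mul_le_mul_left (eLpNorm_mono_measure _ Measure.restrict_le_self) _
    have htend : Tendsto (fun n => eLpNorm (gn n - g') 2 μ * c) atTop (nhds 0) := by
      have := ENNReal.Tendsto.mul_const (b := c) hconv2 (Or.inr hc)
      simpa using this
    exact tendsto_of_tendsto_of_tendsto_of_le_of_le tendsto_const_nhds htend
      (fun _ => zero_le) hbound
  have heqseq : (fun n => ∫ x in A, u x * fn n x ∂μ) = fun n => ∫ x in A, gn n x ∂μ :=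
    funext fun n => (hgn n).2.2 A ⟨hAm, hAfin⟩
  rw [heqseq] at key1
  have : ∫ x in A, u x * f x ∂μ = ∫ x in A, g' x ∂μ := tendsto_nhds_unique key1 key2
  rw [this]
  exact integral_congr_ae (ae_restrict_of_ae heq)
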